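/- Let S and F be real q×q matrices with S symmetric, and let S₃ be the 3q×3q block matrix with block rows [S, S Fᵀ, S (F²)ᵀ], [F S, S, S Fᵀ], and [F² S, F S, S]. Then S₃ is positive definite if and only if both S and S − F S Fᵀ are positive definite. -/

import Mathlib

open Matrix

section Aux

variable {m n : Type*} [Fintype m] [DecidableEq m] [Fintype n] [DecidableEq n]

lemma posDef_of_fromBlocks {A : Matrix m m ℝ} {B : Matrix m n ℝ} {C : Matrix n m ℝ}
    {D : Matrix n n ℝ} (h : (Matrix.fromBlocks A B C D).PosDef) : A.PosDef := by
  obtain ⟨hH, hq⟩ := posDef_iff_dotProduct_mulVec.mp h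
  rw [isHermitian_fromBlocks_iff] at hH
  refine posDef_iff_dotProduct_mulVec.mpr ⟨hH.1, fun x hx => ?_⟩
  have hx' : (Sum.elim x (0 : n → ℝ)) ≠ 0 := by
    intro hc
    exact hx (funext fun i => by simpa using congrFun hc (Sum.inl i))
  have := hq hx'
  simpa [fromBlocks_mulVec, Function.star_sumElim, sumElim_dotProduct_sumElim] using this

lemma posDef_fromBlocks₁₁' {A : Matrix m m ℝ} (B : Matrix m n ℝ) (D : Matrix n n ℝ)
    (hA : A.PosDef) [Invertible A] :
    (Matrix.fromBlocks A B Bᴴ D).PosDef ↔ (D - Bᴴ * A⁻¹ * B).PosDef := by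
  constructor
  · intro h
    refine posDef_iff_dotProduct_mulVec.mpr ⟨(Matrix.IsHermitian.fromBlocks₁₁ B D hA.1).mp h.1, fun x hx => ?_⟩
    have hx' : Sum.elim (-((A⁻¹ * B) *ᵥ x)) x ≠ 0 := by
      intro hc
      exact hx (funext fun i => by simpa using congrFun hc (Sum.inr i))
    have := (posDef_iff_dotProduct_mulVec.mp h).2 hx'
    rw [dotProduct_mulVec, Matrix.schur_complement_eq₁₁ B D _ _ hA.1, neg_add_cancel,
      dotProduct_zero, zero_add] at this
    rw [dotProduct_mulVec]
    exact this
  · intro h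
    refine posDef_iff_dotProduct_mulVec.mpr ⟨(Matrix.IsHermitian.fromBlocks₁₁ B D hA.1).mpr h.1, fun x hx => ?_⟩
    rw [dotProduct_mulVec, ← Sum.elim_comp_inl_inr x,
      Matrix.schur_complement_eq₁₁ B D _ _ hA.1]
    by_cases hxr : x ∘ Sum.inr = 0
    · have hxl : x ∘ Sum.inl ≠ 0 := by
        intro hc
        apply hx
        rw [← Sum.elim_comp_inl_inr x, hc, hxr]
        simp
      rw [hxr, mulVec_zero, add_zero, dotProduct_zero, add_zero, ← dotProduct_mulVec]
      exact hA.dotProduct_mulVec_pos hxl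
    · have h1 : 0 ≤ star (x ∘ Sum.inl + (A⁻¹ * B) *ᵥ x ∘ Sum.inr) ᵥ* A ⬝ᵥ
          (x ∘ Sum.inl + (A⁻¹ * B) *ᵥ x ∘ Sum.inr) := by
        rw [← dotProduct_mulVec]; exact hA.posSemidef.dotProduct_mulVec_nonneg _
      have h2 : 0 < star (x ∘ Sum.inr) ᵥ* (D - Bᴴ * A⁻¹ * B) ⬝ᵥ x ∘ Sum.inr := by
        rw [← dotProduct_mulVec]; exact h.dotProduct_mulVec_pos hxr
      exact add_pos_of_nonneg_of_pos h1 h2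

end Aux

/-- The 3q×3q IW-AR(2) scale matrix with block rows [S, SFᵀ, S(F²)ᵀ], [FS, S, SFᵀ],
[F²S, FS, S]. -/
noncomputable def iwar2ScaleMatrix {q : ℕ} (S F : Matrix (Fin q) (Fin q) ℝ) :
    Matrix (Fin q ⊕ (Fin q ⊕ Fin q)) (Fin q ⊕ (Fin q ⊕ Fin q)) ℝ :=
  Matrix.fromBlocks S (Matrix.fromCols (S * Fᵀ) (S * (F ^ 2)ᵀ))
    (Matrix.fromRows (F * S) (F ^ 2 * S))
    (Matrix.fromBlocks S (S * Fᵀ) (F * S) S)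

/-- Positive definiteness of the IW-AR(2) scale matrix: S₃ is positive definite iff
both S and S − F S Fᵀ are positive definite. -/
theorem iwar2_scale_posDef_iff {q : ℕ} (S F : Matrix (Fin q) (Fin q) ℝ)
    (hS : S.IsSymm) :
    (iwar2ScaleMatrix S F).PosDef ↔ S.PosDef ∧ (S - F * S * Fᵀ).PosDef := by
  have hSt : Sᵀ = S := hS
  set B := Matrix.fromCols (S * Fᵀ) (S * (F ^ 2)ᵀ) with hBdef
  set V := S - F * S * Fᵀ with hVdef
  have hBH : Bᴴ = Matrix.fromRows (F * S) (F ^ 2 * S) := by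
    rw [hBdef, conjTranspose_fromCols_eq_fromRows_conjTranspose,
      conjTranspose_eq_transpose_of_trivial, conjTranspose_eq_transpose_of_trivial,
      transpose_mul, transpose_mul, transpose_transpose, transpose_transpose, hSt]
  have hEq : iwar2ScaleMatrix S F =
      Matrix.fromBlocks S B Bᴴ (Matrix.fromBlocks S (S * Fᵀ) (F * S) S) := by
    rw [iwar2ScaleMatrix, hBH]
  have hVt : Vᵀ = V := by
    simp [hVdef, transpose_sub, transpose_mul, hSt, Matrix.mul_assoc]
  have hM : ∀ _ : Invertible S, Matrix.fromBlocks S (S * Fᵀ) (F * S) S - Bᴴ * S⁻¹ * B =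
      Matrix.fromBlocks V (V * Fᵀ) (F * V) (V + F * V * Fᵀ) := by
    intro hi
    rw [hBH, fromRows_mul, fromRows_mul_fromCols]
    have hc : ∀ X : Matrix (Fin q) (Fin q) ℝ, S * S⁻¹ * X = X := fun X => by
      rw [Matrix.mul_inv_of_invertible, Matrix.one_mul]
    ext (i | i) (j | j) <;> simp only [Matrix.sub_apply, Matrix.fromBlocks_apply₁₁,
      Matrix.fromBlocks_apply₁₂, Matrix.fromBlocks_apply₂₁, Matrix.fromBlocks_apply₂₂] <;>
      congr 1 <;>
      rw [show ∀ X Y : Matrix (Fin q) (Fin q) ℝ, X * S * S⁻¹ * (S * Y) = X * S * Y from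
        fun X Y => by rw [Matrix.mul_assoc X S S⁻¹, Matrix.mul_assoc X (S * S⁻¹),
          ← Matrix.mul_assoc (S*S⁻¹), hc, ← Matrix.mul_assoc]] <;>
      simp [hVdef, pow_two, transpose_mul, Matrix.mul_sub, Matrix.sub_mul, Matrix.mul_assoc,
        Matrix.mul_add, Matrix.add_mul]
  constructor
  · intro h
    rw [hEq] at h
    have hSpd : S.PosDef := posDef_of_fromBlocks h
    haveI := S.invertibleOfIsUnitDet hSpd.det_pos.ne'.isUnit
    rw [posDef_fromBlocks₁₁' _ _ hSpd, hM ‹_›] at h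
    exact ⟨hSpd, posDef_of_fromBlocks h⟩
  · rintro ⟨hSpd, hV⟩
    haveI := S.invertibleOfIsUnitDet hSpd.det_pos.ne'.isUnit
    rw [hEq, posDef_fromBlocks₁₁' _ _ hSpd, hM ‹_›]
    haveI := V.invertibleOfIsUnitDet hV.det_pos.ne'.isUnit
    have hFV : (V * Fᵀ)ᴴ = F * V := by
      rw [conjTranspose_eq_transpose_of_trivial, transpose_mul, transpose_transpose, hVt]
    rw [show F * V = (V * Fᵀ)ᴴ from hFV.symm, posDef_fromBlocks₁₁' _ _ hV, hFV]
    have : V + F * V * Fᵀ - F * V * V⁻¹ * (V * Fᵀ) = V := by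
      rw [Matrix.mul_assoc (F * V) V⁻¹, Matrix.nonsing_inv_mul_cancel_left _ _
        hV.det_pos.ne'.isUnit, add_sub_cancel_right]
    rw [this]
    exact hV
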